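/- Define the hybrid number h(m) of a positive integer m as the minimum number of hybrid vertices over all binary phylogenetic networks with a single leaf x for which the number of directed root-to-leaf paths equals m. Then h(m) ≤ ⌊log₂ m⌋ + s₂(m) − 1, where s₂(m) is the binary digit-sum of m, and h(2^k) = k for every k ≥ 1. -/

import Mathlib

/-- A directed path in a multidigraph with arc multiplicities `arcs`. -/
inductive PathIn (V : Type) (arcs : V → V → ℕ) : V → V → Type
  | nil (v : V) : PathIn V arcs v v
  | cons {u v w : V} (e : Fin (arcs u v)) (p : PathIn V arcs v w) : PathIn V arcs u w

/-- A finite rooted directed acyclic multigraph (parallel arcs allowed, no loops by acyclicity);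
the field `rank` witnesses acyclicity via a topological order. -/
structure PhyloNet where
  V : Type
  fin : Fintype V
  root : V
  arcs : V → V → ℕ
  rank : V → ℕ
  rank_lt : ∀ u v : V, 0 < arcs u v → rank u < rank v

attribute [instance] PhyloNet.fin

namespace PhyloNet

def indeg (N : PhyloNet) (v : N.V) : ℕ := ∑ u : N.V, N.arcs u v

def outdeg (N : PhyloNet) (v : N.V) : ℕ := ∑ u : N.V, N.arcs v u

/-- The number of directed paths from `u` to `v`. -/
noncomputable def pathCount (N : PhyloNet) (u v : N.V) : ℕ := Nat.card (PathIn N.V N.arcs u v)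

def IsLeaf (N : PhyloNet) (v : N.V) : Prop := N.indeg v = 1 ∧ N.outdeg v = 0

/-- A binary phylogenetic network: root indeg 0 outdeg 2; other vertices are leaves,
tree vertices, or (binary) hybrid vertices. -/
def IsBinary (N : PhyloNet) : Prop :=
  N.indeg N.root = 0 ∧ N.outdeg N.root = 2 ∧
  ∀ v : N.V, v ≠ N.root →
    (N.indeg v = 1 ∧ N.outdeg v = 0) ∨
    (N.indeg v = 1 ∧ N.outdeg v = 2) ∨
    (N.indeg v = 2 ∧ N.outdeg v = 1)

/-- A (general) phylogenetic network: hybrid vertices may have indegree ≥ 2. -/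
def IsPhylo (N : PhyloNet) : Prop :=
  N.indeg N.root = 0 ∧ N.outdeg N.root = 2 ∧
  ∀ v : N.V, v ≠ N.root →
    (N.indeg v = 1 ∧ N.outdeg v = 0) ∨
    (N.indeg v = 1 ∧ N.outdeg v = 2) ∨
    (2 ≤ N.indeg v ∧ N.outdeg v = 1)

/-- The number of hybrid vertices. -/
noncomputable def hybridCard (N : PhyloNet) : ℕ := Nat.card {v : N.V // 2 ≤ N.indeg v}

/-- The hybrid number `h(N) = ∑_{h hybrid} (indeg h − 1)`; vertices of indegree ≤ 1
contribute 0 via truncated subtraction. -/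
def hybridNumber (N : PhyloNet) : ℕ := ∑ v : N.V, (N.indeg v - 1)

/-- `x` is the unique leaf of `N`. -/
def SingleLeaf (N : PhyloNet) (x : N.V) : Prop := N.IsLeaf x ∧ ∀ y : N.V, N.IsLeaf y → y = x

/-- `N` realizes the ploidy profile `m`: its leaves can be indexed so that the number of
root-to-leaf directed paths to the `i`-th leaf is `m i`. -/
def Realizes (N : PhyloNet) {n : ℕ} (m : Fin n → ℕ) : Prop :=
  ∃ x : Fin n → N.V, Function.Injective x ∧ (∀ v : N.V, N.IsLeaf v ↔ ∃ i, x i = v) ∧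
    ∀ i, N.pathCount N.root (x i) = m i

/-- The hybrid number of a ploidy profile. -/
noncomputable def profileHybridNumber {n : ℕ} (m : Fin n → ℕ) : ℕ :=
  sInf {h : ℕ | ∃ N : PhyloNet, N.IsPhylo ∧ N.Realizes m ∧ N.hybridNumber = h}

end PhyloNet

/-- The hybrid number of a positive integer `m`: the minimum number of hybrid vertices
over all binary phylogenetic networks with a single leaf and exactly `m` root-to-leaf
directed paths. -/
noncomputable def oneLeafHybridNumber (m : ℕ) : ℕ :=
  sInf {h : ℕ | ∃ (N : PhyloNet) (x : N.V), N.IsBinary ∧ N.SingleLeaf x ∧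
    N.pathCount N.root x = m ∧ N.hybridCard = h}


set_option linter.unusedSectionVars false
section A
open Classical Finset
namespace PhyloAux

variable {V : Type} {A : V → V → ℕ} {rk : V → ℕ}

lemma rank_le (hA : ∀ u v, 0 < A u v → rk u < rk v) :
    ∀ {u w : V}, PathIn V A u w → rk u ≤ rk w := by
  intro u w p
  induction p with
  | nil v => exact le_refl _
  | cons e p ih => exact le_of_lt (lt_of_lt_of_le (hA _ _ e.pos) ih)

lemma rank_lt (hA : ∀ u v, 0 < A u v → rk u < rk v) {u w : V} (h : u ≠ w)
    (p : PathIn V A u w) : rk u < rk w := by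
  cases p with
  | nil v => exact absurd rfl h
  | cons e p => exact lt_of_lt_of_le (hA _ _ e.pos) (rank_le hA p)

lemma isEmpty_path (hA : ∀ u v, 0 < A u v → rk u < rk v) {u w : V} (h : u ≠ w)
    (hr : rk w ≤ rk u) : IsEmpty (PathIn V A u w) :=
  ⟨fun p => absurd (rank_lt hA h p) (not_lt.mpr hr)⟩

lemma path_self_eq_nil (hA : ∀ u v, 0 < A u v → rk u < rk v) {u : V}
    (p : PathIn V A u u) : p = PathIn.nil u := by
  cases p with
  | nil => rfl
  | cons e p =>
    exact absurd (lt_of_lt_of_le (hA _ _ e.pos) (rank_le hA p)) (lt_irrefl _)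

/-- Decomposition of a path at its first arc. -/
def pathEquiv (A : V → V → ℕ) (u w : V) :
    PathIn V A u w ≃ (PLift (u = w)) ⊕ (Σ v : V, Fin (A u v) × PathIn V A v w) where
  toFun p := match p with
    | .nil _ => .inl ⟨rfl⟩
    | .cons e p => .inr ⟨_, e, p⟩
  invFun x := match x with
    | .inl ⟨h⟩ => h ▸ PathIn.nil u
    | .inr ⟨_, e, p⟩ => .cons e p
  left_inv p := by cases p <;> rfl
  right_inv x := by rcases x with ⟨⟨rfl⟩⟩ | ⟨v, e, p⟩ <;> rfl

lemma path_finite [Fintype V] (hA : ∀ u v, 0 < A u v → rk u < rk v) (w : V) :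
    ∀ (n : ℕ) (u : V), Finset.univ.sup rk ≤ n + rk u → Finite (PathIn V A u w) := by
  intro n
  induction n with
  | zero =>
    intro u hu
    haveI : ∀ v : V, Finite (Fin (A u v) × PathIn V A v w) := by
      intro v
      by_cases h : 0 < A u v
      · exact absurd (lt_of_lt_of_le (hA _ _ h) (Finset.le_sup (mem_univ v)))
          (not_lt.mpr (by omega))
      · have : A u v = 0 := by omega
        haveI : IsEmpty (Fin (A u v)) := by rw [this]; exact Fin.isEmpty'
        infer_instance
    exact Finite.of_equiv _ (pathEquiv A u w).symm
  | succ n ih =>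
    intro u hu
    haveI : ∀ v : V, Finite (Fin (A u v) × PathIn V A v w) := by
      intro v
      by_cases h : 0 < A u v
      · haveI := ih v (by have := hA _ _ h; omega)
        infer_instance
      · have : A u v = 0 := by omega
        haveI : IsEmpty (Fin (A u v)) := by rw [this]; exact Fin.isEmpty'
        infer_instance
    exact Finite.of_equiv _ (pathEquiv A u w).symm

lemma path_finite' [Fintype V] (hA : ∀ u v, 0 < A u v → rk u < rk v) (u w : V) :
    Finite (PathIn V A u w) :=
  path_finite hA w (Finset.univ.sup rk) u (by omega)

end PhyloAux

end A
section B
open Classical Finset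
namespace PhyloAux

variable {V : Type} [Fintype V] {A : V → V → ℕ} {rk : V → ℕ}

lemma pc_self (hA : ∀ u v, 0 < A u v → rk u < rk v) (u : V) :
    Nat.card (PathIn V A u u) = 1 := by
  haveI : Nonempty (PathIn V A u u) := ⟨PathIn.nil u⟩
  haveI : Subsingleton (PathIn V A u u) :=
    ⟨fun p q => by rw [path_self_eq_nil hA p, path_self_eq_nil hA q]⟩
  exact Nat.card_unique

lemma pc_zero (hA : ∀ u v, 0 < A u v → rk u < rk v) {u w : V} (h : u ≠ w)
    (hr : rk w ≤ rk u) : Nat.card (PathIn V A u w) = 0 := by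
  haveI := isEmpty_path hA h hr
  exact Nat.card_of_isEmpty

lemma pc_forward (hA : ∀ u v, 0 < A u v → rk u < rk v) {u w : V} (h : u ≠ w) :
    Nat.card (PathIn V A u w) = ∑ v : V, A u v * Nat.card (PathIn V A v w) := by
  haveI : ∀ a b : V, Finite (PathIn V A a b) := fun a b => path_finite' hA a b
  rw [Nat.card_congr (pathEquiv A u w)]
  haveI : IsEmpty (PLift (u = w)) := ⟨fun p => h p.down⟩
  haveI : ∀ v : V, Finite (Fin (A u v) × PathIn V A v w) := fun v => inferInstance
  rw [Nat.card_sum]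
  simp only [Nat.card_of_isEmpty, zero_add]
  haveI : ∀ v : V, Fintype (PathIn V A v w) := fun v => Fintype.ofFinite _
  rw [Nat.card_eq_fintype_card, Fintype.card_sigma]
  congr 1; funext v
  rw [Fintype.card_prod, Fintype.card_fin, Nat.card_eq_fintype_card]

lemma pc_backward (hA : ∀ u v, 0 < A u v → rk u < rk v) {u w : V} (h : u ≠ w) :
    Nat.card (PathIn V A u w) = ∑ v : V, Nat.card (PathIn V A u v) * A v w := by
  -- strong induction on n with rk w ≤ n + rk u
  suffices H : ∀ (n : ℕ) (u : V), rk w ≤ n + rk u → u ≠ w →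
      Nat.card (PathIn V A u w) = ∑ v : V, Nat.card (PathIn V A u v) * A v w by
    exact H (rk w) u (by omega) h
  intro n
  induction n with
  | zero =>
    intro u hu h
    rw [pc_zero hA h (by omega)]
    symm
    refine Finset.sum_eq_zero fun v _ => ?_
    by_cases hv : 0 < A v w
    · have h1 : rk v < rk w := hA _ _ hv
      have : u ≠ v := by rintro rfl; omega
      rw [pc_zero hA this (by omega), zero_mul]
    · have : A v w = 0 := by omega
      rw [this, mul_zero]
  | succ n ih =>
    intro u hu h
    rw [pc_forward hA h]
    have key : ∀ v : V, 0 < A u v →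
        A u v * Nat.card (PathIn V A v w)
          = A u v * (if v = w then 1 else ∑ z : V, Nat.card (PathIn V A v z) * A z w) := by
      intro v hv
      by_cases hvw : v = w
      · subst hvw; rw [if_pos rfl, pc_self hA]
      · rw [if_neg hvw, ih v (by have := hA _ _ hv; omega) hvw]
    have step1 : ∑ v : V, A u v * Nat.card (PathIn V A v w)
        = ∑ v : V, A u v * (if v = w then 1 else ∑ z : V, Nat.card (PathIn V A v z) * A z w) := by
      refine Finset.sum_congr rfl fun v _ => ?_
      by_cases hv : 0 < A u v
      · exact key v hv
      · have : A u v = 0 := by omega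
        rw [this, zero_mul, zero_mul]
    rw [step1]
    -- split off v = w
    rw [show (∑ v : V, A u v * (if v = w then 1 else ∑ z : V, Nat.card (PathIn V A v z) * A z w))
        = A u w + ∑ v ∈ Finset.univ.erase w,
            A u v * (∑ z : V, Nat.card (PathIn V A v z) * A z w) from ?_]
    · -- now RHS: ∑ v, pc u v * A v w = A u w + ∑ over erase
      have swap : ∑ v ∈ Finset.univ.erase w,
            A u v * (∑ z : V, Nat.card (PathIn V A v z) * A z w)
          = ∑ z : V, (∑ v ∈ Finset.univ.erase w, A u v * Nat.card (PathIn V A v z)) * A z w := by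
        simp_rw [Finset.mul_sum, Finset.sum_mul]
        rw [Finset.sum_comm]
        simp_rw [mul_assoc]
      rw [swap]
      have hterm : ∀ z : V,
          (∑ v ∈ Finset.univ.erase w, A u v * Nat.card (PathIn V A v z)) * A z w
          = (∑ v : V, A u v * Nat.card (PathIn V A v z)) * A z w := by
        intro z
        by_cases hz : 0 < A z w
        · congr 1
          rw [← Finset.add_sum_erase _ _ (Finset.mem_univ w)]
          have hne : w ≠ z := by
            intro e; exact absurd (hA _ _ hz) (by rw [e]; exact lt_irrefl _)
          rw [pc_zero hA hne (le_of_lt (hA _ _ hz)), mul_zero, zero_add]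
        · have : A z w = 0 := by omega
          rw [this, mul_zero, mul_zero]
      simp_rw [hterm]
      -- now : A u w + ∑ z, g z * A z w = ∑ v, pc u v * A v w
      have hg : ∀ z : V, z ≠ u →
          (∑ v : V, A u v * Nat.card (PathIn V A v z)) = Nat.card (PathIn V A u z) :=
        fun z hz => (pc_forward hA (Ne.symm hz)).symm
      have hgu : (∑ v : V, A u v * Nat.card (PathIn V A v u)) = 0 := by
        refine Finset.sum_eq_zero fun v _ => ?_
        by_cases hv : 0 < A u v
        · have h1 : rk u < rk v := hA _ _ hv
          rw [pc_zero hA (fun e => by rw [e] at h1; omega) (le_of_lt h1), mul_zero]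
        · have : A u v = 0 := by omega
          rw [this, zero_mul]
      rw [← Finset.add_sum_erase _ (fun z => (∑ v : V, A u v * Nat.card (PathIn V A v z)) * A z w)
            (Finset.mem_univ u),
          ← Finset.add_sum_erase _ (fun z => Nat.card (PathIn V A u z) * A z w)
            (Finset.mem_univ u)]
      rw [hgu, pc_self hA, zero_mul, zero_add, one_mul]
      congr 1
      refine Finset.sum_congr rfl fun z hz => ?_
      rw [hg z (Finset.mem_erase.mp hz).1]
    · rw [← Finset.add_sum_erase _ _ (Finset.mem_univ w), if_pos rfl, mul_one]
      congr 1
      refine Finset.sum_congr rfl fun v hv => ?_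
      rw [if_neg (Finset.mem_erase.mp hv).1]

end PhyloAux
end B
section D
open Classical Finset
namespace PhyloAux

lemma transfer {V V' : Type} [Fintype V] [Fintype V']
    {A : V → V → ℕ} {rk : V → ℕ} (hA : ∀ u v, 0 < A u v → rk u < rk v)
    {A' : V' → V' → ℕ} {rk' : V' → ℕ} (hA' : ∀ u v, 0 < A' u v → rk' u < rk' v)
    {ι : V → V'} (hι : Function.Injective ι)
    (hmap : ∀ u v, A' (ι u) (ι v) = A u v)
    {t : V} (ht : ∀ v, A t v = 0)
    {t' : V'} (ht' : ∀ v, ι v ≠ t')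
    (hnew : ∀ (u : V) (v' : V'), (∀ w, ι w ≠ v') → 0 < A' (ι u) v' →
      u = t ∨ Nat.card (PathIn V' A' v' t') = 0) :
    ∀ u, Nat.card (PathIn V' A' (ι u) t')
      = Nat.card (PathIn V A u t) * Nat.card (PathIn V' A' (ι t) t') := by
  suffices H : ∀ (n : ℕ) (u : V), Finset.univ.sup rk' ≤ n + rk' (ι u) →
      Nat.card (PathIn V' A' (ι u) t')
        = Nat.card (PathIn V A u t) * Nat.card (PathIn V' A' (ι t) t') by
    intro u; exact H (Finset.univ.sup rk') u (by omega)
  intro n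
  induction n with
  | zero =>
    intro u hu
    by_cases hut : u = t
    · subst hut; rw [pc_self hA, one_mul]
    · rw [pc_forward hA' (ht' u), pc_forward hA hut]
      have h1 : ∀ v' : V', A' (ι u) v' * Nat.card (PathIn V' A' v' t') = 0 := by
        intro v'
        by_cases hv : 0 < A' (ι u) v'
        · exact absurd (lt_of_lt_of_le (hA' _ _ hv) (Finset.le_sup (mem_univ v')))
            (by omega)
        · have : A' (ι u) v' = 0 := by omega
          rw [this, zero_mul]
      have h2 : ∀ v : V, A u v * Nat.card (PathIn V A v t) = 0 := by
        intro v
        by_cases hv : 0 < A u v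
        · have : 0 < A' (ι u) (ι v) := by rw [hmap]; exact hv
          exact absurd (lt_of_lt_of_le (hA' _ _ this) (Finset.le_sup (mem_univ (ι v))))
            (by omega)
        · have : A u v = 0 := by omega
          rw [this, zero_mul]
      simp only [h1, h2, Finset.sum_const_zero, zero_mul]
  | succ n ih =>
    intro u hu
    by_cases hut : u = t
    · subst hut; rw [pc_self hA, one_mul]
    · rw [pc_forward hA' (ht' u)]
      rw [← Finset.sum_add_sum_compl (Finset.univ.image ι)]
      have hcompl : ∑ v' ∈ (Finset.univ.image ι)ᶜ,
          A' (ι u) v' * Nat.card (PathIn V' A' v' t') = 0 := by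
        refine Finset.sum_eq_zero fun v' hv' => ?_
        have hnotim : ∀ w, ι w ≠ v' := by
          intro w hw
          exact (Finset.mem_compl.mp hv') (Finset.mem_image.mpr ⟨w, mem_univ w, hw⟩)
        by_cases hv : 0 < A' (ι u) v'
        · rcases hnew u v' hnotim hv with h | h
          · exact absurd h hut
          · rw [h, mul_zero]
        · have : A' (ι u) v' = 0 := by omega
          rw [this, zero_mul]
      rw [hcompl, add_zero]
      rw [Finset.sum_image (fun x _ y _ h => hι h)]
      have hterm : ∀ v : V, A' (ι u) (ι v) * Nat.card (PathIn V' A' (ι v) t')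
          = A u v * (Nat.card (PathIn V A v t) * Nat.card (PathIn V' A' (ι t) t')) := by
        intro v
        rw [hmap]
        by_cases hv : 0 < A u v
        · have hr : rk' (ι u) < rk' (ι v) := hA' _ _ (by rw [hmap]; exact hv)
          rw [ih v (by omega)]
        · have : A u v = 0 := by omega
          rw [this, zero_mul, zero_mul]
      simp_rw [hterm, ← mul_assoc, ← Finset.sum_mul]
      rw [← pc_forward hA hut]

end PhyloAux
end D
section E
open Classical Finset
namespace PhyloAux

lemma hybridCard_eq_filter (N : PhyloNet) :
    N.hybridCard = (Finset.univ.filter (fun v => 2 ≤ N.indeg v)).card := by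
  rw [PhyloNet.hybridCard, Nat.card_eq_fintype_card, Fintype.card_subtype]

lemma pc_le_pow (N : PhyloNet) (hB : N.IsBinary) (v : N.V) :
    N.pathCount N.root v ≤
      2 ^ (Finset.univ.filter (fun h => 2 ≤ N.indeg h ∧ N.rank h ≤ N.rank v)).card := by
  suffices H : ∀ (n : ℕ) (v : N.V), N.rank v ≤ n → N.pathCount N.root v ≤
      2 ^ (Finset.univ.filter (fun h => 2 ≤ N.indeg h ∧ N.rank h ≤ N.rank v)).card by
    exact H (N.rank v) v le_rfl
  intro n
  induction n with
  | zero =>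
    intro v hv
    by_cases hroot : v = N.root
    · subst hroot
      rw [PhyloNet.pathCount, pc_self N.rank_lt]
      exact Nat.one_le_two_pow
    · rw [PhyloNet.pathCount, pc_backward N.rank_lt (fun e => hroot e.symm)]
      have : ∀ u : N.V, Nat.card (PathIn N.V N.arcs N.root u) * N.arcs u v = 0 := by
        intro u
        by_cases hu : 0 < N.arcs u v
        · exact absurd (N.rank_lt _ _ hu) (by omega)
        · have : N.arcs u v = 0 := by omega
          rw [this, mul_zero]
      simp only [this, Finset.sum_const_zero]
      exact Nat.zero_le _
  | succ n ih =>
    intro v hv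
    by_cases hroot : v = N.root
    · subst hroot
      rw [PhyloNet.pathCount, pc_self N.rank_lt]
      exact Nat.one_le_two_pow
    · rw [PhyloNet.pathCount, pc_backward N.rank_lt (fun e => hroot e.symm)]
      set C := (Finset.univ.filter (fun h => 2 ≤ N.indeg h ∧ N.rank h < N.rank v)).card with hC
      have step : ∀ u : N.V, Nat.card (PathIn N.V N.arcs N.root u) * N.arcs u v
          ≤ 2 ^ C * N.arcs u v := by
        intro u
        by_cases hu : 0 < N.arcs u v
        · have hr : N.rank u < N.rank v := N.rank_lt _ _ hu
          have h1 := ih u (by omega)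
          refine Nat.mul_le_mul ?_ le_rfl
          refine le_trans h1 (Nat.pow_le_pow_right (by norm_num) ?_)
          refine Finset.card_le_card ?_
          intro h hh
          simp only [Finset.mem_filter, Finset.mem_univ, true_and] at hh ⊢
          exact ⟨hh.1, by omega⟩
        · have : N.arcs u v = 0 := by omega
          rw [this, mul_zero, mul_zero]
      have hsum : ∑ u : N.V, Nat.card (PathIn N.V N.arcs N.root u) * N.arcs u v
          ≤ 2 ^ C * N.indeg v := by
        rw [PhyloNet.indeg, Finset.mul_sum]
        exact Finset.sum_le_sum fun u _ => step u
      refine le_trans hsum ?_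
      have hsub : (Finset.univ.filter (fun h => 2 ≤ N.indeg h ∧ N.rank h < N.rank v))
          ⊆ (Finset.univ.filter (fun h => 2 ≤ N.indeg h ∧ N.rank h ≤ N.rank v)) := by
        intro h hh
        simp only [Finset.mem_filter, Finset.mem_univ, true_and] at hh ⊢
        exact ⟨hh.1, le_of_lt hh.2⟩
      rcases hB.2.2 v hroot with h | h | h
      · rw [h.1, mul_one]
        exact Nat.pow_le_pow_right (by norm_num) (Finset.card_le_card hsub)
      · rw [h.1, mul_one]
        exact Nat.pow_le_pow_right (by norm_num) (Finset.card_le_card hsub)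
      · rw [h.1]
        have hv2 : v ∈ Finset.univ.filter (fun h => 2 ≤ N.indeg h ∧ N.rank h ≤ N.rank v) := by
          simp only [Finset.mem_filter, Finset.mem_univ, true_and]
          exact ⟨h.1.ge.trans_eq rfl, le_rfl⟩
        have hv3 : v ∉ Finset.univ.filter (fun h => 2 ≤ N.indeg h ∧ N.rank h < N.rank v) := by
          simp
        have : C < (Finset.univ.filter (fun h => 2 ≤ N.indeg h ∧ N.rank h ≤ N.rank v)).card :=
          Finset.card_lt_card ⟨hsub, fun hsup => hv3 (hsup hv2)⟩
        calc 2 ^ C * 2 = 2 ^ (C + 1) := by ring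
        _ ≤ _ := Nat.pow_le_pow_right (by norm_num) (by omega)

lemma exists_path_to_leaf (N : PhyloNet) (hB : N.IsBinary) {x : N.V} (hx : N.SingleLeaf x) :
    ∀ v : N.V, Nonempty (PathIn N.V N.arcs v x) := by
  suffices H : ∀ (n : ℕ) (v : N.V), Finset.univ.sup N.rank ≤ n + N.rank v →
      Nonempty (PathIn N.V N.arcs v x) by
    intro v; exact H (Finset.univ.sup N.rank) v (by omega)
  intro n
  induction n with
  | zero =>
    intro v hv
    by_cases hvx : v = x
    · subst hvx; exact ⟨PathIn.nil _⟩
    · exfalso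
      have hout : N.outdeg v = 0 := by
        rw [PhyloNet.outdeg]
        refine Finset.sum_eq_zero fun w _ => ?_
        by_cases hw : 0 < N.arcs v w
        · exact absurd (lt_of_lt_of_le (N.rank_lt _ _ hw) (Finset.le_sup (mem_univ w)))
            (by omega)
        · omega
      by_cases hroot : v = N.root
      · rw [hroot, hB.2.1] at hout; omega
      · rcases hB.2.2 v hroot with h | h | h
        · exact hvx (hx.2 v h)
        · omega
        · omega
  | succ n ih =>
    intro v hv
    by_cases hvx : v = x
    · subst hvx; exact ⟨PathIn.nil _⟩
    · have hout : N.outdeg v ≠ 0 := by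
        by_cases hroot : v = N.root
        · rw [hroot, hB.2.1]; omega
        · rcases hB.2.2 v hroot with h | h | h
          · exact absurd (hx.2 v h) hvx
          · omega
          · omega
      rw [PhyloNet.outdeg] at hout
      obtain ⟨w, -, hw⟩ := Finset.exists_ne_zero_of_sum_ne_zero hout
      have hr : N.rank v < N.rank w := N.rank_lt _ _ (by omega)
      obtain ⟨p⟩ := ih w (by omega)
      exact ⟨PathIn.cons (⟨0, by omega⟩ : Fin (N.arcs v w)) p⟩

lemma two_le_pc (N : PhyloNet) (hB : N.IsBinary) {x : N.V} (hx : N.SingleLeaf x) :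
    2 ≤ N.pathCount N.root x := by
  have hne : N.root ≠ x := by
    intro e
    have := hx.1.1
    rw [← e, hB.1] at this; omega
  rw [PhyloNet.pathCount, pc_forward N.rank_lt hne]
  have : ∀ w : N.V, N.arcs N.root w * 1 ≤ N.arcs N.root w * Nat.card (PathIn N.V N.arcs w x) := by
    intro w
    refine Nat.mul_le_mul le_rfl ?_
    haveI := path_finite' N.rank_lt w x
    haveI := exists_path_to_leaf N hB hx w
    exact Nat.one_le_iff_ne_zero.mpr (Nat.card_ne_zero.mpr ⟨‹_›, ‹_›⟩)
  calc 2 = N.outdeg N.root := hB.2.1.symm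
  _ = ∑ w : N.V, N.arcs N.root w * 1 := by simp [PhyloNet.outdeg]
  _ ≤ _ := Finset.sum_le_sum fun w _ => this w

end PhyloAux
end E

section F
open Classical Finset
namespace PhyloAux

open Classical in
noncomputable def dArcs (N : PhyloNet) (x : N.V) : (N.V ⊕ Fin 2) → (N.V ⊕ Fin 2) → ℕ
  | Sum.inl a, Sum.inl b => N.arcs a b
  | Sum.inl a, Sum.inr i => if a = x ∧ i = 0 then 2 else 0
  | Sum.inr i, Sum.inr j => if i = 0 ∧ j = 1 then 1 else 0
  | Sum.inr _, Sum.inl _ => 0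

def dRank (N : PhyloNet) : (N.V ⊕ Fin 2) → ℕ
  | Sum.inl a => N.rank a
  | Sum.inr i => Finset.univ.sup N.rank + 1 + i.val

lemma dRank_lt (N : PhyloNet) (x : N.V) :
    ∀ u v, 0 < dArcs N x u v → dRank N u < dRank N v := by
  rintro (a|i) (b|j) h
  · exact N.rank_lt a b h
  · simp only [dArcs] at h
    split at h
    · rename_i hc
      simp only [dRank, hc.2]
      exact lt_of_le_of_lt (Finset.le_sup (Finset.mem_univ a)) (by omega)
    · omega
  · simp [dArcs] at h
  · simp only [dArcs] at h
    split at h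
    · rename_i hc
      simp only [dRank, hc.1, hc.2]
      norm_num
    · omega

noncomputable def NDouble (N : PhyloNet) (x : N.V) : PhyloNet where
  V := N.V ⊕ Fin 2
  fin := inferInstance
  root := Sum.inl N.root
  arcs := dArcs N x
  rank := dRank N
  rank_lt := dRank_lt N x

lemma NDouble_indeg_inl (N : PhyloNet) (x : N.V) (v : N.V) :
    (NDouble N x).indeg (Sum.inl v) = N.indeg v := by
  unfold PhyloNet.indeg
  show (∑ u : N.V ⊕ Fin 2, dArcs N x u (Sum.inl v)) = _
  rw [Fintype.sum_sum_type]
  simp [dArcs]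

lemma NDouble_outdeg_inl (N : PhyloNet) (x : N.V) (v : N.V) :
    (NDouble N x).outdeg (Sum.inl v) = N.outdeg v + if v = x then 2 else 0 := by
  unfold PhyloNet.outdeg
  show (∑ u : N.V ⊕ Fin 2, dArcs N x (Sum.inl v) u) = _
  rw [Fintype.sum_sum_type]
  congr 1
  rw [Fin.sum_univ_two]
  by_cases h : v = x <;> simp [dArcs, h]

lemma NDouble_indeg_inr0 (N : PhyloNet) (x : N.V) :
    (NDouble N x).indeg (Sum.inr 0) = 2 := by
  unfold PhyloNet.indeg
  show (∑ u : N.V ⊕ Fin 2, dArcs N x u (Sum.inr 0)) = _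
  rw [Fintype.sum_sum_type]
  simp [dArcs, Finset.sum_ite_eq']

lemma NDouble_indeg_inr1 (N : PhyloNet) (x : N.V) :
    (NDouble N x).indeg (Sum.inr 1) = 1 := by
  unfold PhyloNet.indeg
  show (∑ u : N.V ⊕ Fin 2, dArcs N x u (Sum.inr 1)) = _
  rw [Fintype.sum_sum_type, Fin.sum_univ_two]
  simp [dArcs]

lemma NDouble_outdeg_inr0 (N : PhyloNet) (x : N.V) :
    (NDouble N x).outdeg (Sum.inr 0) = 1 := by
  unfold PhyloNet.outdeg
  show (∑ u : N.V ⊕ Fin 2, dArcs N x (Sum.inr 0) u) = _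
  rw [Fintype.sum_sum_type, Fin.sum_univ_two]
  simp [dArcs]

lemma NDouble_outdeg_inr1 (N : PhyloNet) (x : N.V) :
    (NDouble N x).outdeg (Sum.inr 1) = 0 := by
  unfold PhyloNet.outdeg
  show (∑ u : N.V ⊕ Fin 2, dArcs N x (Sum.inr 1) u) = _
  rw [Fintype.sum_sum_type, Fin.sum_univ_two]
  simp [dArcs]

end PhyloAux
end F

section G
open Classical Finset
namespace PhyloAux

lemma root_ne_leaf (N : PhyloNet) (hB : N.IsBinary) {x : N.V} (hx : N.IsLeaf x) :
    N.root ≠ x := fun e => by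
  have := hx.1; rw [← e, hB.1] at this; omega

lemma leaf_arcs_zero (N : PhyloNet) {x : N.V} (hx : N.IsLeaf x) (v : N.V) :
    N.arcs x v = 0 := by
  have h0 := hx.2
  rw [PhyloNet.outdeg] at h0
  exact (Finset.sum_eq_zero_iff.mp h0) v (Finset.mem_univ v)

lemma NDouble_isBinary (N : PhyloNet) (x : N.V) (hB : N.IsBinary) (hx : N.SingleLeaf x) :
    (NDouble N x).IsBinary := by
  have hrx : N.root ≠ x := root_ne_leaf N hB hx.1
  refine ⟨?_, ?_, ?_⟩
  · show (NDouble N x).indeg (Sum.inl N.root) = 0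
    rw [NDouble_indeg_inl, hB.1]
  · show (NDouble N x).outdeg (Sum.inl N.root) = 2
    rw [NDouble_outdeg_inl, hB.2.1, if_neg hrx]
  · rintro (v|i) hv
    · have hvr : v ≠ N.root := fun e => hv (by rw [e]; rfl)
      by_cases hvx : v = x
      · subst hvx
        right; left
        rw [NDouble_indeg_inl, NDouble_outdeg_inl, if_pos rfl, hx.1.1, hx.1.2]
        exact ⟨rfl, rfl⟩
      · rw [NDouble_indeg_inl, NDouble_outdeg_inl, if_neg hvx, add_zero]
        exact hB.2.2 v hvr
    · match i with
      | 0 => right; right; rw [NDouble_indeg_inr0, NDouble_outdeg_inr0]; exact ⟨rfl, rfl⟩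
      | 1 => left; rw [NDouble_indeg_inr1, NDouble_outdeg_inr1]; exact ⟨rfl, rfl⟩

lemma NDouble_singleLeaf (N : PhyloNet) (x : N.V) (hB : N.IsBinary) (hx : N.SingleLeaf x) :
    (NDouble N x).SingleLeaf (Sum.inr 1) := by
  constructor
  · exact ⟨NDouble_indeg_inr1 N x, NDouble_outdeg_inr1 N x⟩
  · rintro (v|i) hy
    · exfalso
      rcases hy with ⟨h1, h2⟩
      rw [NDouble_indeg_inl] at h1
      rw [NDouble_outdeg_inl] at h2
      by_cases hvx : v = x
      · rw [if_pos hvx] at h2; omega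
      · rw [if_neg hvx, add_zero] at h2
        exact hvx (hx.2 v ⟨h1, h2⟩)
    · match i with
      | 0 => exfalso; have := hy.1; rw [NDouble_indeg_inr0] at this; omega
      | 1 => rfl

lemma NDouble_pathCount (N : PhyloNet) (x : N.V) (hB : N.IsBinary) (hx : N.SingleLeaf x) :
    (NDouble N x).pathCount (NDouble N x).root (Sum.inr 1) = 2 * N.pathCount N.root x := by
  have hA' := dRank_lt N x
  have htransfer := transfer N.rank_lt hA' (Sum.inl_injective (α := N.V) (β := Fin 2))
    (fun u v => rfl) (leaf_arcs_zero N hx.1)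
    (t' := Sum.inr 1) (fun v => by simp)
    (fun u v' hv' hpos => by
      match v' with
      | Sum.inl w => exact absurd rfl (hv' w)
      | Sum.inr i =>
        left
        simp only [dArcs] at hpos
        split at hpos
        · rename_i hc; exact hc.1
        · omega)
  have h11 : Nat.card (PathIn (N.V ⊕ Fin 2) (dArcs N x) (Sum.inr 1) (Sum.inr 1)) = 1 :=
    pc_self hA' _
  have h01 : Nat.card (PathIn (N.V ⊕ Fin 2) (dArcs N x) (Sum.inr 0) (Sum.inr 1)) = 1 := by
    rw [pc_forward hA' (by simp), Fintype.sum_sum_type, Fin.sum_univ_two]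
    simp only [dArcs, h11]
    norm_num
  have hx1 : Nat.card (PathIn (N.V ⊕ Fin 2) (dArcs N x) (Sum.inl x) (Sum.inr 1)) = 2 := by
    rw [pc_forward hA' (by simp), Fintype.sum_sum_type, Fin.sum_univ_two]
    simp only [dArcs, h01, h11, leaf_arcs_zero N hx.1]
    norm_num
  show Nat.card (PathIn (N.V ⊕ Fin 2) (dArcs N x) (Sum.inl N.root) (Sum.inr 1)) = _
  rw [htransfer N.root, hx1, PhyloNet.pathCount]
  ring

lemma NDouble_hybridCard (N : PhyloNet) (x : N.V) :
    (NDouble N x).hybridCard = N.hybridCard + 1 := by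
  rw [PhyloNet.hybridCard, PhyloNet.hybridCard]
  show Nat.card {v : N.V ⊕ Fin 2 // 2 ≤ (NDouble N x).indeg v} = _
  rw [Nat.card_congr (Equiv.subtypeSum
    (p := fun v : N.V ⊕ Fin 2 => 2 ≤ (NDouble N x).indeg v)), Nat.card_sum]
  congr 1
  · exact Nat.card_congr (Equiv.subtypeEquivRight (fun v => by rw [NDouble_indeg_inl]))
  · have : ∀ i : Fin 2, (2 ≤ (NDouble N x).indeg (Sum.inr i)) ↔ i = 0 := by
      intro i
      match i with
      | 0 => simp [NDouble_indeg_inr0]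
      | 1 => rw [NDouble_indeg_inr1]; simp
    rw [Nat.card_congr (Equiv.subtypeEquivRight this), Nat.card_eq_fintype_card,
      Fintype.card_subtype_eq]

lemma NDouble_spec (N : PhyloNet) (x : N.V) (hB : N.IsBinary) (hx : N.SingleLeaf x) :
    ∃ (M : PhyloNet) (y : M.V), M.IsBinary ∧ M.SingleLeaf y ∧
      M.pathCount M.root y = 2 * N.pathCount N.root x ∧ M.hybridCard = N.hybridCard + 1 :=
  ⟨NDouble N x, Sum.inr 1, NDouble_isBinary N x hB hx, NDouble_singleLeaf N x hB hx,
    NDouble_pathCount N x hB hx, NDouble_hybridCard N x⟩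

end PhyloAux
end G

section H
open Classical Finset
namespace PhyloAux

open Classical in
noncomputable def eArcs (N : PhyloNet) (x : N.V) : (N.V ⊕ Fin 4) → (N.V ⊕ Fin 4) → ℕ
  | Sum.inl a, Sum.inl b => N.arcs a b
  | Sum.inl a, Sum.inr i => if a = x ∧ i = 1 then 2 else 0
  | Sum.inr i, Sum.inl b => if i = 0 ∧ b = N.root then 1 else 0
  | Sum.inr i, Sum.inr j =>
      if (i = 0 ∧ j = 2) ∨ (i = 1 ∧ j = 2) ∨ (i = 2 ∧ j = 3) then 1 else 0

def eRank (N : PhyloNet) : (N.V ⊕ Fin 4) → ℕ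
  | Sum.inl a => N.rank a + 1
  | Sum.inr i => i.val * (Finset.univ.sup N.rank + 2)

lemma eRank_lt (N : PhyloNet) (x : N.V) :
    ∀ u v, 0 < eArcs N x u v → eRank N u < eRank N v := by
  have hsup : ∀ a : N.V, N.rank a ≤ Finset.univ.sup N.rank :=
    fun a => Finset.le_sup (Finset.mem_univ a)
  rintro (a|i) (b|j) h
  · exact Nat.add_lt_add_right (N.rank_lt a b h) 1
  · simp only [eArcs] at h
    split at h
    · rename_i hc
      rw [hc.2]
      simp only [eRank]
      have := hsup a
      have hv : ((1 : Fin 4) : ℕ) = 1 := rfl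
      rw [hv]
      omega
    · omega
  · simp only [eArcs] at h
    split at h
    · rename_i hc
      rw [hc.1]
      simp only [eRank]
      have hv : ((0 : Fin 4) : ℕ) = 0 := rfl
      rw [hv]
      omega
    · omega
  · simp only [eArcs] at h
    split at h
    · rename_i hc
      simp only [eRank]
      have h0 : ((0 : Fin 4) : ℕ) = 0 := rfl
      have h1 : ((1 : Fin 4) : ℕ) = 1 := rfl
      have h2' : ((2 : Fin 4) : ℕ) = 2 := rfl
      have h3 : ((3 : Fin 4) : ℕ) = 3 := rfl
      rcases hc with ⟨ha, hb⟩ | ⟨ha, hb⟩ | ⟨ha, hb⟩ <;> subst ha <;> subst hb <;>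
        simp only [h0, h1, h2', h3] <;> omega
    · omega

noncomputable def NDouble1 (N : PhyloNet) (x : N.V) : PhyloNet where
  V := N.V ⊕ Fin 4
  fin := inferInstance
  root := Sum.inr 0
  arcs := eArcs N x
  rank := eRank N
  rank_lt := eRank_lt N x

lemma NDouble1_indeg_inl (N : PhyloNet) (x : N.V) (v : N.V) :
    (NDouble1 N x).indeg (Sum.inl v) = N.indeg v + if v = N.root then 1 else 0 := by
  unfold PhyloNet.indeg
  show (∑ u : N.V ⊕ Fin 4, eArcs N x u (Sum.inl v)) = _
  rw [Fintype.sum_sum_type]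
  congr 1
  rw [Fin.sum_univ_four]
  by_cases h : v = N.root <;> simp [eArcs, h]

lemma NDouble1_outdeg_inl (N : PhyloNet) (x : N.V) (v : N.V) :
    (NDouble1 N x).outdeg (Sum.inl v) = N.outdeg v + if v = x then 2 else 0 := by
  unfold PhyloNet.outdeg
  show (∑ u : N.V ⊕ Fin 4, eArcs N x (Sum.inl v) u) = _
  rw [Fintype.sum_sum_type]
  congr 1
  rw [Fin.sum_univ_four]
  by_cases h : v = x <;> simp [eArcs, h]

lemma NDouble1_indeg_inr (N : PhyloNet) (x : N.V) :
    (NDouble1 N x).indeg (Sum.inr 0) = 0 ∧ (NDouble1 N x).indeg (Sum.inr 1) = 2 ∧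
    (NDouble1 N x).indeg (Sum.inr 2) = 2 ∧ (NDouble1 N x).indeg (Sum.inr 3) = 1 := by
  refine ⟨?_, ?_, ?_, ?_⟩ <;>
  · unfold PhyloNet.indeg
    show (∑ u : N.V ⊕ Fin 4, eArcs N x u _) = _
    rw [Fintype.sum_sum_type, Fin.sum_univ_four]
    simp [eArcs, Finset.sum_ite_eq']

lemma NDouble1_outdeg_inr (N : PhyloNet) (x : N.V) :
    (NDouble1 N x).outdeg (Sum.inr 0) = 2 ∧ (NDouble1 N x).outdeg (Sum.inr 1) = 1 ∧
    (NDouble1 N x).outdeg (Sum.inr 2) = 1 ∧ (NDouble1 N x).outdeg (Sum.inr 3) = 0 := by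
  refine ⟨?_, ?_, ?_, ?_⟩ <;>
  · unfold PhyloNet.outdeg
    show (∑ u : N.V ⊕ Fin 4, eArcs N x _ u) = _
    rw [Fintype.sum_sum_type, Fin.sum_univ_four]
    simp [eArcs, Finset.sum_ite_eq']

lemma NDouble1_isBinary (N : PhyloNet) (x : N.V) (hB : N.IsBinary) (hx : N.SingleLeaf x) :
    (NDouble1 N x).IsBinary := by
  have hrx : N.root ≠ x := root_ne_leaf N hB hx.1
  obtain ⟨hi0, hi1, hi2, hi3⟩ := NDouble1_indeg_inr N x
  obtain ⟨ho0, ho1, ho2, ho3⟩ := NDouble1_outdeg_inr N x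
  refine ⟨hi0, ho0, ?_⟩
  rintro (v|i) hv
  · by_cases hvr : v = N.root
    · subst hvr
      right; left
      rw [NDouble1_indeg_inl, NDouble1_outdeg_inl, if_pos rfl, if_neg hrx, hB.1, hB.2.1]
      exact ⟨rfl, rfl⟩
    · by_cases hvx : v = x
      · right; left
        rw [NDouble1_indeg_inl, NDouble1_outdeg_inl, if_neg hvr, if_pos hvx, hvx,
          hx.1.1, hx.1.2]
        exact ⟨rfl, rfl⟩
      · rw [NDouble1_indeg_inl, NDouble1_outdeg_inl, if_neg hvr, if_neg hvx,
          add_zero, add_zero]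
        exact hB.2.2 v hvr
  · match i with
    | 0 => exact absurd rfl hv
    | 1 => right; right; exact ⟨hi1, ho1⟩
    | 2 => right; right; exact ⟨hi2, ho2⟩
    | 3 => left; exact ⟨hi3, ho3⟩

lemma NDouble1_singleLeaf (N : PhyloNet) (x : N.V) (hB : N.IsBinary) (hx : N.SingleLeaf x) :
    (NDouble1 N x).SingleLeaf (Sum.inr 3) := by
  obtain ⟨hi0, hi1, hi2, hi3⟩ := NDouble1_indeg_inr N x
  obtain ⟨ho0, ho1, ho2, ho3⟩ := NDouble1_outdeg_inr N x
  constructor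
  · exact ⟨hi3, ho3⟩
  · rintro (v|i) hy
    · exfalso
      rcases hy with ⟨h1, h2⟩
      rw [NDouble1_indeg_inl] at h1
      rw [NDouble1_outdeg_inl] at h2
      by_cases hvx : v = x
      · rw [if_pos hvx] at h2; omega
      · rw [if_neg hvx, add_zero] at h2
        by_cases hvr : v = N.root
        · subst hvr; rw [hB.2.1] at h2; omega
        · rw [if_neg hvr, add_zero] at h1
          exact hvx (hx.2 v ⟨h1, h2⟩)
    · match i with
      | 0 => exfalso; have := hy.2; rw [ho0] at this; omega
      | 1 => exfalso; have := hy.1; rw [hi1] at this; omega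
      | 2 => exfalso; have := hy.1; rw [hi2] at this; omega
      | 3 => rfl

lemma NDouble1_pathCount (N : PhyloNet) (x : N.V) (hB : N.IsBinary) (hx : N.SingleLeaf x) :
    (NDouble1 N x).pathCount (NDouble1 N x).root (Sum.inr 3)
      = 2 * N.pathCount N.root x + 1 := by
  have hA' := eRank_lt N x
  have htransfer := transfer N.rank_lt hA' (Sum.inl_injective (α := N.V) (β := Fin 4))
    (fun u v => rfl) (leaf_arcs_zero N hx.1)
    (t' := Sum.inr 3) (fun v => by simp)
    (fun u v' hv' hpos => by
      match v' with
      | Sum.inl w => exact absurd rfl (hv' w)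
      | Sum.inr i =>
        left
        simp only [eArcs] at hpos
        split at hpos
        · rename_i hc; exact hc.1
        · omega)
  have h33 : Nat.card (PathIn (N.V ⊕ Fin 4) (eArcs N x) (Sum.inr 3) (Sum.inr 3)) = 1 :=
    pc_self hA' _
  have h23 : Nat.card (PathIn (N.V ⊕ Fin 4) (eArcs N x) (Sum.inr 2) (Sum.inr 3)) = 1 := by
    rw [pc_forward hA' (by simp), Fintype.sum_sum_type, Fin.sum_univ_four]
    simp [eArcs, h33]
  have h13 : Nat.card (PathIn (N.V ⊕ Fin 4) (eArcs N x) (Sum.inr 1) (Sum.inr 3)) = 1 := by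
    rw [pc_forward hA' (by simp), Fintype.sum_sum_type, Fin.sum_univ_four]
    simp [eArcs, h23, h33]
  have hx3 : Nat.card (PathIn (N.V ⊕ Fin 4) (eArcs N x) (Sum.inl x) (Sum.inr 3)) = 2 := by
    rw [pc_forward hA' (by simp), Fintype.sum_sum_type, Fin.sum_univ_four]
    simp [eArcs, h13, leaf_arcs_zero N hx.1]
  have hr3 : Nat.card (PathIn (N.V ⊕ Fin 4) (eArcs N x) (Sum.inl N.root) (Sum.inr 3))
      = 2 * N.pathCount N.root x := by
    rw [htransfer N.root, hx3, PhyloNet.pathCount]; ring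
  show Nat.card (PathIn (N.V ⊕ Fin 4) (eArcs N x) (Sum.inr 0) (Sum.inr 3)) = _
  rw [pc_forward hA' (by simp), Fintype.sum_sum_type, Fin.sum_univ_four]
  have hsum : (∑ a : N.V, eArcs N x (Sum.inr 0) (Sum.inl a)
        * Nat.card (PathIn (N.V ⊕ Fin 4) (eArcs N x) (Sum.inl a) (Sum.inr 3)))
      = 2 * N.pathCount N.root x := by
    rw [show (∑ a : N.V, eArcs N x (Sum.inr 0) (Sum.inl a)
        * Nat.card (PathIn (N.V ⊕ Fin 4) (eArcs N x) (Sum.inl a) (Sum.inr 3)))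
      = ∑ a : N.V, (if a = N.root then 1 else 0)
        * Nat.card (PathIn (N.V ⊕ Fin 4) (eArcs N x) (Sum.inl a) (Sum.inr 3)) from
      Finset.sum_congr rfl fun a _ => by simp [eArcs]]
    simp only [ite_mul, one_mul, zero_mul]
    rw [Finset.sum_ite_eq' Finset.univ N.root]
    simp [hr3]
  rw [hsum]
  simp [eArcs, h23, h33]

lemma NDouble1_hybridCard (N : PhyloNet) (x : N.V) (hB : N.IsBinary) :
    (NDouble1 N x).hybridCard = N.hybridCard + 2 := by
  obtain ⟨hi0, hi1, hi2, hi3⟩ := NDouble1_indeg_inr N x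
  rw [PhyloNet.hybridCard, PhyloNet.hybridCard]
  show Nat.card {v : N.V ⊕ Fin 4 // 2 ≤ (NDouble1 N x).indeg v} = _
  rw [Nat.card_congr (Equiv.subtypeSum
    (p := fun v : N.V ⊕ Fin 4 => 2 ≤ (NDouble1 N x).indeg v)), Nat.card_sum]
  congr 1
  · refine Nat.card_congr (Equiv.subtypeEquivRight (fun v => ?_))
    rw [NDouble1_indeg_inl]
    by_cases h : v = N.root
    · subst h; rw [if_pos rfl, hB.1]; simp
    · rw [if_neg h, add_zero]
  · have : ∀ i : Fin 4, (2 ≤ (NDouble1 N x).indeg (Sum.inr i)) ↔ (i = 1 ∨ i = 2) := by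
      intro i
      match i with
      | 0 => rw [hi0]; simp
      | 1 => rw [hi1]; simp
      | 2 => rw [hi2]; simp
      | 3 => rw [hi3]; simp
    rw [Nat.card_congr (Equiv.subtypeEquivRight this), Nat.card_eq_fintype_card,
      Fintype.card_subtype]
    decide

lemma NDouble1_spec (N : PhyloNet) (x : N.V) (hB : N.IsBinary) (hx : N.SingleLeaf x) :
    ∃ (M : PhyloNet) (y : M.V), M.IsBinary ∧ M.SingleLeaf y ∧
      M.pathCount M.root y = 2 * N.pathCount N.root x + 1 ∧
      M.hybridCard = N.hybridCard + 2 :=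
  ⟨NDouble1 N x, Sum.inr 3, NDouble1_isBinary N x hB hx, NDouble1_singleLeaf N x hB hx,
    NDouble1_pathCount N x hB hx, NDouble1_hybridCard N x hB⟩

end PhyloAux
end H

section I
open Finset
namespace PhyloAux

def b2A : Fin 3 → Fin 3 → ℕ :=
  fun i j => if i = 0 ∧ j = 1 then 2 else if i = 1 ∧ j = 2 then 1 else 0

lemma b2lt : ∀ u v : Fin 3, 0 < b2A u v → (u : ℕ) < (v : ℕ) := by decide

@[reducible] def B2 : PhyloNet where
  V := Fin 3
  fin := inferInstance
  root := 0
  arcs := b2A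
  rank i := i.val
  rank_lt := b2lt

lemma B2_isBinary : B2.IsBinary := by
  letI : DecidableEq B2.V := inferInstanceAs (DecidableEq (Fin 3))
  unfold PhyloNet.IsBinary
  decide

lemma B2_singleLeaf : B2.SingleLeaf ((2 : Fin 3) : B2.V) := by
  letI : DecidableEq B2.V := inferInstanceAs (DecidableEq (Fin 3))
  unfold PhyloNet.SingleLeaf PhyloNet.IsLeaf
  decide

lemma B2_pathCount : B2.pathCount B2.root ((2 : Fin 3) : B2.V) = 2 := by
  have h22 : Nat.card (PathIn (Fin 3) b2A 2 2) = 1 := pc_self b2lt 2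
  have h12 : Nat.card (PathIn (Fin 3) b2A 1 2) = 1 := by
    rw [pc_forward b2lt (show (1 : Fin 3) ≠ 2 by decide), Fin.sum_univ_three]
    simp [b2A, h22]
  show Nat.card (PathIn (Fin 3) b2A 0 2) = 2
  rw [pc_forward b2lt (show (0 : Fin 3) ≠ 2 by decide), Fin.sum_univ_three]
  simp [b2A, h12]

lemma B2_hybridCard : B2.hybridCard = 1 := by
  rw [PhyloNet.hybridCard]
  show Nat.card {v : Fin 3 // 2 ≤ B2.indeg v} = 1
  have : ∀ v : Fin 3, (2 ≤ B2.indeg v) ↔ v = 1 := by decide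
  rw [Nat.card_congr (Equiv.subtypeEquivRight this), Nat.card_eq_fintype_card,
    Fintype.card_subtype_eq]

def b3A : Fin 5 → Fin 5 → ℕ :=
  fun i j =>
    if i = 0 ∧ j = 1 then 1 else if i = 0 ∧ j = 3 then 1 else
    if i = 1 ∧ j = 2 then 2 else if i = 2 ∧ j = 3 then 1 else
    if i = 3 ∧ j = 4 then 1 else 0

lemma b3lt : ∀ u v : Fin 5, 0 < b3A u v → (u : ℕ) < (v : ℕ) := by decide

@[reducible] def B3 : PhyloNet where
  V := Fin 5
  fin := inferInstance
  root := 0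
  arcs := b3A
  rank i := i.val
  rank_lt := b3lt

lemma B3_isBinary : B3.IsBinary := by
  letI : DecidableEq B3.V := inferInstanceAs (DecidableEq (Fin 5))
  unfold PhyloNet.IsBinary
  decide

lemma B3_singleLeaf : B3.SingleLeaf ((4 : Fin 5) : B3.V) := by
  letI : DecidableEq B3.V := inferInstanceAs (DecidableEq (Fin 5))
  unfold PhyloNet.SingleLeaf PhyloNet.IsLeaf
  decide

lemma B3_pathCount : B3.pathCount B3.root ((4 : Fin 5) : B3.V) = 3 := by
  have h44 : Nat.card (PathIn (Fin 5) b3A 4 4) = 1 := pc_self b3lt 4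
  have h34 : Nat.card (PathIn (Fin 5) b3A 3 4) = 1 := by
    rw [pc_forward b3lt (show (3 : Fin 5) ≠ 4 by decide), Fin.sum_univ_five]
    simp [b3A, h44]
  have h24 : Nat.card (PathIn (Fin 5) b3A 2 4) = 1 := by
    rw [pc_forward b3lt (show (2 : Fin 5) ≠ 4 by decide), Fin.sum_univ_five]
    simp [b3A, h34]
  have h14 : Nat.card (PathIn (Fin 5) b3A 1 4) = 2 := by
    rw [pc_forward b3lt (show (1 : Fin 5) ≠ 4 by decide), Fin.sum_univ_five]
    simp [b3A, h24]
  show Nat.card (PathIn (Fin 5) b3A 0 4) = 3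
  rw [pc_forward b3lt (show (0 : Fin 5) ≠ 4 by decide), Fin.sum_univ_five]
  simp [b3A, h14, h34]

lemma B3_hybridCard : B3.hybridCard = 2 := by
  rw [PhyloNet.hybridCard]
  show Nat.card {v : Fin 5 // 2 ≤ B3.indeg v} = 2
  have : ∀ v : Fin 5, (2 ≤ B3.indeg v) ↔ (v = 2 ∨ v = 3) := by decide
  rw [Nat.card_congr (Equiv.subtypeEquivRight this), Nat.card_eq_fintype_card,
    Fintype.card_subtype]
  decide

end PhyloAux
end I

section J
open Finset
namespace PhyloAux

def bound (m : ℕ) : ℕ := Nat.log 2 m + (Nat.digits 2 m).sum - 1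

lemma digits_double {m : ℕ} (hm : 0 < m) : Nat.digits 2 (2 * m) = 0 :: Nat.digits 2 m := by
  rw [Nat.digits_def' (b := 2) (by norm_num) (by omega)]
  congr 1
  · omega
  · congr 1; omega

lemma digits_double1 (m : ℕ) : Nat.digits 2 (2 * m + 1) = 1 :: Nat.digits 2 m := by
  rw [Nat.digits_def' (b := 2) (by norm_num) (by omega)]
  congr 1
  · omega
  · congr 1; omega

lemma bound_double {m : ℕ} (hm : 2 ≤ m) : bound (2 * m) = bound m + 1 := by
  have hlog : Nat.log 2 (2 * m) = Nat.log 2 m + 1 := by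
    rw [mul_comm]; exact Nat.log_mul_base (by norm_num) (by omega)
  have hpos : 0 < Nat.log 2 m := Nat.log_pos (by norm_num) hm
  rw [bound, bound, hlog, digits_double (by omega), List.sum_cons]
  omega

lemma bound_double1 {m : ℕ} (hm : 2 ≤ m) : bound (2 * m + 1) = bound m + 2 := by
  have h2 := Nat.pow_log_le_self 2 (show m ≠ 0 by omega)
  have h3 := Nat.lt_pow_succ_log_self (show 1 < 2 by norm_num) m
  have hlog : Nat.log 2 (2 * m + 1) = Nat.log 2 m + 1 := by
    refine Nat.log_eq_of_pow_le_of_lt_pow ?_ ?_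
    · rw [pow_succ]; omega
    · rw [pow_succ]; rw [pow_succ] at h3; omega
  have hpos : 0 < Nat.log 2 m := Nat.log_pos (by norm_num) hm
  rw [bound, bound, hlog, digits_double1, List.sum_cons]
  omega

lemma bound_two : bound 2 = 1 := by
  have : Nat.digits 2 2 = [0, 1] := by
    rw [show (2 : ℕ) = 2 * 1 by norm_num, digits_double (by norm_num)]
    norm_num
  have hl : Nat.log 2 2 = 1 := by
    rw [show (2 : ℕ) = 2 ^ 1 by norm_num]
    exact Nat.log_pow (by norm_num) 1
  rw [bound, this, hl]
  decide

lemma bound_three : bound 3 = 2 := by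
  have : Nat.digits 2 3 = [1, 1] := by
    rw [show (3 : ℕ) = 2 * 1 + 1 by norm_num, digits_double1]
    norm_num
  have hl : Nat.log 2 3 = 1 := Nat.log_eq_of_pow_le_of_lt_pow (by norm_num) (by norm_num)
  rw [bound, this, hl]
  decide

lemma good : ∀ m : ℕ, 2 ≤ m → ∃ (N : PhyloNet) (x : N.V), N.IsBinary ∧ N.SingleLeaf x ∧
    N.pathCount N.root x = m ∧ N.hybridCard = bound m := by
  intro m
  induction m using Nat.strong_induction_on with
  | _ m ih =>
    intro hm
    rcases Nat.lt_or_ge m 4 with h4 | h4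
    · interval_cases m
      · exact ⟨B2, _, B2_isBinary, B2_singleLeaf, B2_pathCount, by rw [B2_hybridCard, bound_two]⟩
      · exact ⟨B3, _, B3_isBinary, B3_singleLeaf, B3_pathCount, by rw [B3_hybridCard, bound_three]⟩
    · have hq2 : 2 ≤ m / 2 := by omega
      have hqlt : m / 2 < m := by omega
      obtain ⟨N, x, hB, hx, hpc, hcard⟩ := ih (m / 2) hqlt hq2
      rcases Nat.even_or_odd m with he | ho
      · obtain ⟨c, hc⟩ := he
        obtain ⟨M, y, h1, h2, h3, h4'⟩ := NDouble_spec N x hB hx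
        refine ⟨M, y, h1, h2, ?_, ?_⟩
        · rw [h3, hpc]; omega
        · rw [h4', hcard, ← bound_double hq2]
          congr 1
          omega
      · obtain ⟨M, y, h1, h2, h3, h4'⟩ := NDouble1_spec N x hB hx
        refine ⟨M, y, h1, h2, ?_, ?_⟩
        · rw [h3, hpc]
          obtain ⟨c, hc⟩ := ho; omega
        · rw [h4', hcard, ← bound_double1 hq2]
          congr 1
          obtain ⟨c, hc⟩ := ho; omega

lemma lower_bound {m h : ℕ}
    (hmem : h ∈ {h : ℕ | ∃ (N : PhyloNet) (x : N.V), N.IsBinary ∧ N.SingleLeaf x ∧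
      N.pathCount N.root x = m ∧ N.hybridCard = h}) : m ≤ 2 ^ h := by
  obtain ⟨N, x, hB, hx, hpc, hcard⟩ := hmem
  have h1 := pc_le_pow N hB x
  have h2 : (Finset.univ.filter (fun hh => 2 ≤ N.indeg hh ∧ N.rank hh ≤ N.rank x)).card
      ≤ (Finset.univ.filter (fun v => 2 ≤ N.indeg v)).card := by
    refine Finset.card_le_card fun v hv => ?_
    simp only [Finset.mem_filter, Finset.mem_univ, true_and] at hv ⊢
    exact hv.1
  rw [hpc] at h1
  calc m ≤ 2 ^ (Finset.univ.filter (fun hh => 2 ≤ N.indeg hh ∧ N.rank hh ≤ N.rank x)).card := h1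
  _ ≤ 2 ^ (Finset.univ.filter (fun v => 2 ≤ N.indeg v)).card :=
      Nat.pow_le_pow_right (by norm_num) h2
  _ = 2 ^ h := by rw [← hybridCard_eq_filter, hcard]

lemma digits_pow_sum : ∀ k : ℕ, (Nat.digits 2 (2 ^ k)).sum = 1
  | 0 => by norm_num
  | (k + 1) => by
    rw [show (2 : ℕ) ^ (k + 1) = 2 * 2 ^ k by ring,
      digits_double (by positivity), List.sum_cons, digits_pow_sum k]

end PhyloAux
end J

/-- `h(m) ≤ ⌊log₂ m⌋ + s₂(m) − 1` for every positive `m`, and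
`h(2^k) = k` for every `k ≥ 1`. -/
theorem stmt5 :
    (∀ m : ℕ, 0 < m → oneLeafHybridNumber m ≤ Nat.log 2 m + (Nat.digits 2 m).sum - 1) ∧
    (∀ k : ℕ, 1 ≤ k → oneLeafHybridNumber (2 ^ k) = k) := by
  constructor
  · intro m hm
    rcases Nat.lt_or_ge m 2 with h2 | h2
    · have hm1 : m = 1 := by omega
      subst hm1
      have hempty : {h : ℕ | ∃ (N : PhyloNet) (x : N.V), N.IsBinary ∧ N.SingleLeaf x ∧
          N.pathCount N.root x = 1 ∧ N.hybridCard = h} = ∅ := by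
        ext h
        simp only [Set.mem_setOf_eq, Set.mem_empty_iff_false, iff_false]
        rintro ⟨N, x, hB, hx, hpc, -⟩
        have := PhyloAux.two_le_pc N hB hx
        omega
      rw [oneLeafHybridNumber, hempty, Nat.sInf_empty]
      exact Nat.zero_le _
    · obtain ⟨N, x, h1, h2', h3, h4⟩ := PhyloAux.good m h2
      have hmem : PhyloAux.bound m ∈ {h : ℕ | ∃ (N : PhyloNet) (x : N.V), N.IsBinary ∧
          N.SingleLeaf x ∧ N.pathCount N.root x = m ∧ N.hybridCard = h} :=
        ⟨N, x, h1, h2', h3, h4⟩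
      exact Nat.sInf_le hmem
  · intro k hk
    have h2k : 2 ≤ 2 ^ k := by
      calc (2 : ℕ) = 2 ^ 1 := rfl
      _ ≤ 2 ^ k := Nat.pow_le_pow_right (by norm_num) hk
    obtain ⟨N, x, h1, h2', h3, h4⟩ := PhyloAux.good (2 ^ k) h2k
    have hbk : PhyloAux.bound (2 ^ k) = k := by
      rw [PhyloAux.bound, Nat.log_pow (by norm_num), PhyloAux.digits_pow_sum k]
      omega
    set S := {h : ℕ | ∃ (N : PhyloNet) (x : N.V), N.IsBinary ∧ N.SingleLeaf x ∧
      N.pathCount N.root x = 2 ^ k ∧ N.hybridCard = h} with hS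
    have hunfold : oneLeafHybridNumber (2 ^ k) = sInf S := rfl
    have hmem : k ∈ S := ⟨N, x, h1, h2', h3, by rw [h4, hbk]⟩
    have hub : oneLeafHybridNumber (2 ^ k) ≤ k := by
      rw [hunfold]; exact Nat.sInf_le hmem
    have hne : S.Nonempty := ⟨k, hmem⟩
    have hmem2 := Nat.sInf_mem hne
    have hlb : (2 : ℕ) ^ k ≤ 2 ^ sInf S := PhyloAux.lower_bound hmem2
    have hk2 : k ≤ sInf S := (Nat.pow_le_pow_iff_right (by norm_num)).mp hlb
    rw [hunfold]
    exact le_antisymm (hunfold ▸ hub) hk2
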